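/- Let (X⁽¹⁾, X⁽²⁾) be an exchangeable pair of square-integrable random vectors in ℝ^D, each with positive definite covariance matrix. Suppose (u⁽¹⁾, u⁽²⁾) satisfy the CCA generalized eigenvector equations Σ¹²u⁽²⁾ = ρΣ¹¹u⁽¹⁾ and Σ²¹u⁽¹⁾ = ρΣ²²u⁽²⁾ with ρ > 0 and u⁽¹⁾ ≠ u⁽²⁾. Then the cross-covariance matrix Σ¹² = Cov(X⁽¹⁾, X⁽²⁾) has a strictly negative eigenvalue, i.e., there exists Δ ≠ 0 with ΔᵀΣ¹²Δ < 0. -/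

import Mathlib

open Matrix MeasureTheory

/-- Covariance matrix of a pair of random vectors. -/
noncomputable def covMat {Ω : Type*} [MeasurableSpace Ω] (ℙ : Measure Ω) {D : ℕ}
    (X Y : Ω → Fin D → ℝ) : Matrix (Fin D) (Fin D) ℝ :=
  Matrix.of fun a b =>
    (∫ ω, X ω a * Y ω b ∂ℙ) - (∫ ω, X ω a ∂ℙ) * (∫ ω, Y ω b ∂ℙ)

lemma key_exch {Ω : Type*} [MeasurableSpace Ω] (ℙ : Measure Ω) {D : ℕ}
    (X1 X2 : Ω → Fin D → ℝ) (hmeas1 : Measurable X1) (hmeas2 : Measurable X2)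
    (hexch : Measure.map (fun ω => (X1 ω, X2 ω)) ℙ =
      Measure.map (fun ω => (X2 ω, X1 ω)) ℙ)
    (f : (Fin D → ℝ) × (Fin D → ℝ) → ℝ) (hf : Measurable f) :
    ∫ ω, f (X1 ω, X2 ω) ∂ℙ = ∫ ω, f (X2 ω, X1 ω) ∂ℙ := by
  rw [← integral_map (hmeas1.prodMk hmeas2).aemeasurable hf.aestronglyMeasurable,
    hexch, integral_map (hmeas2.prodMk hmeas1).aemeasurable hf.aestronglyMeasurable]

theorem stmt_10 {Ω : Type*} [MeasurableSpace Ω] (ℙ : Measure Ω) [IsProbabilityMeasure ℙ]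
    {D : ℕ} (X1 X2 : Ω → Fin D → ℝ)
    (hmeas1 : Measurable X1) (hmeas2 : Measurable X2)
    (hL2_1 : ∀ a, MemLp (fun ω => X1 ω a) 2 ℙ)
    (hL2_2 : ∀ a, MemLp (fun ω => X2 ω a) 2 ℙ)
    (hexch : Measure.map (fun ω => (X1 ω, X2 ω)) ℙ =
      Measure.map (fun ω => (X2 ω, X1 ω)) ℙ)
    (hpd1 : (covMat ℙ X1 X1).PosDef) (hpd2 : (covMat ℙ X2 X2).PosDef)
    (u1 u2 : Fin D → ℝ) (ρ : ℝ) (hρ : 0 < ρ) (hneq : u1 ≠ u2)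
    (hc1 : (covMat ℙ X1 X2).mulVec u2 = ρ • (covMat ℙ X1 X1).mulVec u1)
    (hc2 : (covMat ℙ X2 X1).mulVec u1 = ρ • (covMat ℙ X2 X2).mulVec u2) :
    ∃ Δ : Fin D → ℝ, Δ ≠ 0 ∧ Δ ⬝ᵥ (covMat ℙ X1 X2).mulVec Δ < 0 := by
  have hAA : covMat ℙ X1 X1 = covMat ℙ X2 X2 := by
    ext a b
    simp only [covMat, Matrix.of_apply]
    rw [key_exch ℙ X1 X2 hmeas1 hmeas2 hexch (fun p => p.1 a * p.1 b)
        (((measurable_fst.eval)).mul (measurable_fst.eval)),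
      key_exch ℙ X1 X2 hmeas1 hmeas2 hexch (fun p => p.1 a) (measurable_fst.eval),
      key_exch ℙ X1 X2 hmeas1 hmeas2 hexch (fun p => p.1 b) (measurable_fst.eval)]
  have hBB : covMat ℙ X1 X2 = covMat ℙ X2 X1 := by
    ext a b
    simp only [covMat, Matrix.of_apply]
    rw [key_exch ℙ X1 X2 hmeas1 hmeas2 hexch (fun p => p.1 a * p.2 b)
        ((measurable_fst.eval).mul (measurable_snd.eval)),
      key_exch ℙ X1 X2 hmeas1 hmeas2 hexch (fun p => p.1 a) (measurable_fst.eval),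
      key_exch ℙ X1 X2 hmeas1 hmeas2 hexch (fun p => p.2 b) (measurable_snd.eval)]
  set A := covMat ℙ X1 X1
  set B := covMat ℙ X1 X2
  set Δ := u1 - u2 with hΔ
  have hΔne : Δ ≠ 0 := sub_ne_zero.mpr hneq
  have hBΔ : B.mulVec Δ = -(ρ • A.mulVec Δ) := by
    rw [← hBB, ← hAA] at hc2
    rw [hΔ, Matrix.mulVec_sub, hc1, hc2, Matrix.mulVec_sub, smul_sub]
    abel
  refine ⟨Δ, hΔne, ?_⟩
  rw [hBΔ]
  have hpos : 0 < Δ ⬝ᵥ A.mulVec Δ := by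
    have := hpd1.dotProduct_mulVec_pos hΔne
    simpa using this
  simp only [dotProduct_neg, dotProduct_smul, smul_eq_mul, neg_neg, Left.neg_neg_iff]
  positivity
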